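/- arXiv:0708.1160 — 4 statements merged into one kernel-verified Lean document; each statement's English description precedes it below -/
import Mathlib

section
/- Let M be a quaternion CR-submanifold of a locally conformal quaternion Kaehler manifold M̄. Then for any X ∈ Γ(D) and T, W ∈ Γ(D^⊥), the shape operator satisfies g(A_{J_aT}W, X) = g(A_{J_aW}T, X) for each a = 1,2,3. -/
/-!
Abstract model of a locally conformal quaternion Kaehler (l.c.q.K.) manifold `M̄`
together with a quaternion CR-submanifold `M`.

`R` plays the role of the (commutative) ring of smooth functions on `M̄` and `V`
that of the `R`-module of vector fields on `M̄`.  The structure `LCQK` records: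
a derivation action `act` of vector fields on functions, the Lie bracket, the
Riemannian metric `g`, its Levi-Civita connection `nabla`, the three local almost
complex structures `J a` (a = 1,2,3, indexed by `Fin 3`) satisfying the quaternionic
identities and compatibility with `g`, the Lee vector field `B` (the Lee form is
`ω X = g X B`), the skew-symmetric matrix `Q` of local 1-forms, and the fundamental
structure equation (2.4) of a l.c.q.K. manifold:
`∇̄_X (J_a Y) = J_a ∇̄_X Y + ½{θ_a(Y) X − ω(Y) J_a X − Ω_a(X,Y) B + g(X,Y) J_a B}
   + Q_{ab}(X) J_b Y + Q_{ac}(X) J_c Y`,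
where `θ_a = ω ∘ J_a` and `Ω_a(X,Y) = g(X, J_a Y)`.
`half` is the function `1/2`.
-/
structure LCQK (R : Type) (V : Type) [CommRing R] [AddCommGroup V] [Module R V] where
  half : R
  half_add : half + half = 1
  /-- action of a vector field on a function (derivation) -/
  act : V → R → R
  act_add : ∀ X f g, act X (f + g) = act X f + act X g
  act_mul : ∀ X f g, act X (f * g) = f * act X g + g * act X f
  /-- Lie bracket of vector fields -/
  bracket : V → V → V
  /-- the Riemannian metric of `M̄` -/
  g : V → V → R
  g_symm : ∀ X Y, g X Y = g Y X
  g_add_left : ∀ X Y Z, g (X + Y) Z = g X Z + g Y Z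
  g_smul_left : ∀ (f : R) (X Y : V), g (f • X) Y = f * g X Y
  /-- the Levi-Civita connection `∇̄` of `M̄` -/
  nabla : V → V → V
  nabla_add_left : ∀ X Y Z, nabla (X + Y) Z = nabla X Z + nabla Y Z
  nabla_smul_left : ∀ (f : R) (X Y : V), nabla (f • X) Y = f • nabla X Y
  nabla_add_right : ∀ X Y Z, nabla X (Y + Z) = nabla X Y + nabla X Z
  nabla_smul_right : ∀ (X : V) (f : R) (Y : V),
    nabla X (f • Y) = f • nabla X Y + act X f • Y
  nabla_metric : ∀ X Y Z, act X (g Y Z) = g (nabla X Y) Z + g Y (nabla X Z)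
  torsion_free : ∀ X Y, nabla X Y - nabla Y X = bracket X Y
  /-- the local almost complex structures `J₁, J₂, J₃` spanning the bundle `H` -/
  J : Fin 3 → V → V
  J_add : ∀ a X Y, J a (X + Y) = J a X + J a Y
  J_smul : ∀ a (f : R) (X : V), J a (f • X) = f • J a X
  J_sq : ∀ a X, J a (J a X) = -X
  J_cyc : ∀ a X, J a (J (a + 1) X) = J (a + 2) X
  g_J : ∀ a X Y, g (J a X) (J a Y) = g X Y
  /-- the Lee vector field `B` (so the Lee form is `ω X = g X B`) -/
  B : V
  /-- the skew-symmetric matrix of local 1-forms `Q_{ab}` -/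
  Q : Fin 3 → Fin 3 → V → R
  Q_skew : ∀ a b X, Q a b X = -Q b a X
  /-- the l.c.q.K. structure equation (2.4) -/
  struct_eq : ∀ a X Y,
    nabla X (J a Y) = J a (nabla X Y)
      + half • ((g (J a Y) B) • X - (g Y B) • J a X - (g X (J a Y)) • B
          + (g X Y) • J a B)
      + (Q a (a + 1) X) • J (a + 1) Y + (Q a (a + 2) X) • J (a + 2) Y

namespace LCQK

variable {R V : Type} [CommRing R] [AddCommGroup V] [Module R V]

/-- the Lee form `ω X = g(X, B)` -/
def lee (d : LCQK R V) (X : V) : R := d.g X d.B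

/-- the fundamental 2-forms `Ω_a(X,Y) = g(X, J_a Y)` -/
def Om (d : LCQK R V) (a : Fin 3) (X Y : V) : R := d.g X (d.J a Y)

/-- the curvature tensor `R̄(X,Y)Z` of the Levi-Civita connection of `M̄` -/
def curv (d : LCQK R V) (X Y Z : V) : V :=
  d.nabla X (d.nabla Y Z) - d.nabla Y (d.nabla X Z) - d.nabla (d.bracket X Y) Z

/-- the (0,4) curvature tensor `R̄(X,Y,Z,W) = g(R̄(X,Y)Z, W)` of `M̄` -/
def R4 (d : LCQK R V) (X Y Z W : V) : R := d.g (d.curv X Y Z) W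

end LCQK

/-- A quaternion CR-submanifold `M` of the l.c.q.K. manifold `M̄`.

`DD` is (the module of sections of) the quaternion (invariant) distribution `D`,
`Dp` the totally real (anti-invariant) distribution `D^⊥`; they are orthogonal and
the tangent bundle of `M` is `TM = D ⊕ D^⊥` (modelled by `DD ⊔ Dp`); each `J_a`
preserves `D` and maps `D^⊥` into the normal bundle `TM^⊥`.  `tan` is the
orthogonal projection of `M̄`-vector fields onto the tangent part of `M`. -/
structure QCRSub (R V : Type) [CommRing R] [AddCommGroup V] [Module R V]
    (d : LCQK R V) where
  DD : Submodule R V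
  Dp : Submodule R V
  orth : ∀ X ∈ DD, ∀ Z ∈ Dp, d.g X Z = 0
  J_inv : ∀ (a : Fin 3), ∀ X ∈ DD, d.J a X ∈ DD
  J_anti : ∀ (a : Fin 3), ∀ Z ∈ Dp, ∀ Y ∈ DD ⊔ Dp, d.g (d.J a Z) Y = 0
  /-- tangential projection onto `TM = D ⊕ D^⊥` -/
  tan : V → V
  tan_add : ∀ X Y, tan (X + Y) = tan X + tan Y
  tan_smul : ∀ (f : R) (X : V), tan (f • X) = f • tan X
  tan_mem : ∀ X, tan X ∈ DD ⊔ Dp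
  tan_of_mem : ∀ X ∈ DD ⊔ Dp, tan X = X
  tan_orth : ∀ (X : V), ∀ Y ∈ DD ⊔ Dp, d.g (X - tan X) Y = 0
  bracket_tangent : ∀ X ∈ DD ⊔ Dp, ∀ Y ∈ DD ⊔ Dp, d.bracket X Y ∈ DD ⊔ Dp

namespace QCRSub

variable {R V : Type} [CommRing R] [AddCommGroup V] [Module R V] {d : LCQK R V}

/-- the tangent bundle `TM = D ⊕ D^⊥` of `M` -/
def Tg (s : QCRSub R V d) : Submodule R V := s.DD ⊔ s.Dp

/-- a vector field is normal to `M` if it is orthogonal to all tangent fields -/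
def IsNormal (s : QCRSub R V d) (N : V) : Prop := ∀ Y ∈ s.Tg, d.g N Y = 0

/-- normal part of a vector field along `M` -/
def nor (s : QCRSub R V d) (X : V) : V := X - s.tan X

/-- the induced (Levi-Civita) connection `∇` of `M` (Gauss formula) -/
def conn (s : QCRSub R V d) (X Y : V) : V := s.tan (d.nabla X Y)

/-- the second fundamental form `h` of `M` (Gauss formula `∇̄_X Y = ∇_X Y + h(X,Y)`) -/
def h (s : QCRSub R V d) (X Y : V) : V := d.nabla X Y - s.tan (d.nabla X Y)

/-- the shape operator `A_N X` (Weingarten formula `∇̄_X N = −A_N X + ∇^⊥_X N`) -/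
def A (s : QCRSub R V d) (N X : V) : V := -(s.tan (d.nabla X N))

/-- the normal connection `∇^⊥` -/
def nconn (s : QCRSub R V d) (X N : V) : V := d.nabla X N - s.tan (d.nabla X N)

/-- `φ_a X`: tangential part of `J_a X` for `X` tangent -/
def phi (s : QCRSub R V d) (a : Fin 3) (X : V) : V := s.tan (d.J a X)

/-- `ϖ_a X`: normal part of `J_a X` for `X` tangent -/
def varpi (s : QCRSub R V d) (a : Fin 3) (X : V) : V := s.nor (d.J a X)

/-- `f_a N`: tangential part of `J_a N` for `N` normal -/
def fpart (s : QCRSub R V d) (a : Fin 3) (N : V) : V := s.tan (d.J a N)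

/-- `t_a N`: normal (μ-)part of `J_a N` for `N` normal -/
def tn (s : QCRSub R V d) (a : Fin 3) (N : V) : V := s.nor (d.J a N)

/-- membership in `μ`, the orthogonal complement of the `J_a D^⊥` in `TM^⊥` -/
def inMu (s : QCRSub R V d) (N : V) : Prop :=
  s.IsNormal N ∧ ∀ (a : Fin 3), ∀ Z ∈ s.Dp, d.g N (d.J a Z) = 0

end QCRSub

/-- equation (3.6): For a quaternion CR-submanifold `M` of a l.c.q.K.
manifold, for any `X ∈ Γ(D)` and `T, W ∈ Γ(D^⊥)` the shape operator satisfies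
`g(A_{J_aT}W, X) = g(A_{J_aW}T, X)` for each `a = 1,2,3`. -/
theorem shape_symmetric {R V : Type} [CommRing R] [AddCommGroup V] [Module R V]
    (d : LCQK R V) (s : QCRSub R V d) :
    ∀ (a : Fin 3), ∀ X ∈ s.DD, ∀ T ∈ s.Dp, ∀ W ∈ s.Dp,
      d.g (s.A (d.J a T) W) X = d.g (s.A (d.J a W) T) X := by
  intro a X hX T hT W hW
  have hXT : X ∈ s.DD ⊔ s.Dp := Submodule.mem_sup_left hX
  have hTT : T ∈ s.DD ⊔ s.Dp := Submodule.mem_sup_right hT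
  have hWT : W ∈ s.DD ⊔ s.Dp := Submodule.mem_sup_right hW
  have act0 : ∀ Y : V, d.act Y 0 = 0 := by
    intro Y
    have h := d.act_add Y 0 0
    simp only [add_zero] at h
    linear_combination -h
  have g_smul_right : ∀ (f : R) (U Z : V), d.g U (f • Z) = f * d.g U Z := by
    intro f U Z; rw [d.g_symm, d.g_smul_left, d.g_symm]
  have g_add_right : ∀ (U Y Z : V), d.g U (Y + Z) = d.g U Y + d.g U Z := by
    intro U Y Z; rw [d.g_symm, d.g_add_left, d.g_symm Y, d.g_symm Z]
  have g_sub_left : ∀ (U Y Z : V), d.g (U - Y) Z = d.g U Z - d.g Y Z := by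
    intro U Y Z
    rw [sub_eq_add_neg, d.g_add_left, ← neg_one_smul R Y, d.g_smul_left]; ring
  have g_neg_right : ∀ (U Z : V), d.g U (-Z) = - d.g U Z := by
    intro U Z; rw [← neg_one_smul R Z, g_smul_right]; ring
  have skew : ∀ (b : Fin 3) (U Z : V), d.g (d.J b U) Z = - d.g U (d.J b Z) := by
    intro b U Z
    have h := d.g_J b U (d.J b Z)
    rw [d.J_sq, g_neg_right] at h
    linear_combination -h
  -- Step 1: reduce the shape operator to `g(J_a P, ∇̄_X Q')` for P, Q' ∈ D^⊥.
  have red : ∀ P ∈ s.Dp, ∀ P' ∈ s.Dp,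
      d.g (s.A (d.J a P) P') X = d.g (d.J a P) (d.nabla X P') := by
    intro P hP P' hP'
    have hP'T : P' ∈ s.DD ⊔ s.Dp := Submodule.mem_sup_right hP'
    set v := d.nabla P' (d.J a P) with hv
    have htan : d.g (s.tan v) X = d.g v X := by
      have h := s.tan_orth v X hXT
      rw [g_sub_left] at h
      linear_combination -h
    have hz : d.g (d.J a P) X = 0 := s.J_anti a P hP X hXT
    have hm := d.nabla_metric P' (d.J a P) X
    rw [hz, act0] at hm
    have e3 : d.nabla P' X = d.bracket P' X + d.nabla X P' :=
      sub_eq_iff_eq_add.mp (d.torsion_free P' X)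
    have e4 : d.g (d.J a P) (d.nabla P' X) = d.g (d.J a P) (d.nabla X P') := by
      rw [e3, g_add_right,
        s.J_anti a P hP _ (s.bracket_tangent P' hP'T X hXT), zero_add]
    have hA : s.A (d.J a P) P' = -(s.tan v) := rfl
    rw [hA, ← neg_one_smul R (s.tan v), d.g_smul_left, htan]
    linear_combination hm + e4
  rw [red T hT W hW, red W hW T hT]
  -- Step 2: use the structure equation.
  have z0 : d.g X W = 0 := s.orth X hX W hW
  have z1 : d.g X T = 0 := s.orth X hX T hT
  have z2 : d.g (d.J a X) T = 0 := s.orth _ (s.J_inv a X hX) T hT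
  have z3 : d.g X (d.J a W) = 0 := by
    rw [d.g_symm]; exact s.J_anti a W hW X hXT
  have z4 : d.g (d.J (a + 1) W) T = 0 := s.J_anti _ W hW T hTT
  have z5 : d.g (d.J (a + 2) W) T = 0 := s.J_anti _ W hW T hTT
  have hz2 : d.g (d.J a W) T = 0 := s.J_anti a W hW T hTT
  have hm2 := d.nabla_metric X (d.J a W) T
  rw [hz2, act0] at hm2
  have hs : d.g (d.nabla X (d.J a W)) T = - d.g (d.nabla X W) (d.J a T) := by
    rw [d.struct_eq a X W]
    simp only [d.g_add_left, g_sub_left, d.g_smul_left, z0, z1, z2, z3, z4, z5,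
      skew a (d.nabla X W) T]
    ring
  linear_combination hm2 + hs - d.g_symm (d.nabla X W) (d.J a T)
end

section
/- Let M be a quaternion CR-submanifold of a locally conformal quaternion Kaehler manifold M̄. Then for any X ∈ Γ(D) and Z ∈ Γ(D^⊥), one has g(∇_X X, Z) = g(A_{J_aZ}X, J_aX) − (1/2)‖X‖² ω(Z), and g(∇_{J_aX}(J_aX), Z) = −g(A_{J_aZ}X, J_aX) − (1/2)‖X‖² ω(Z), where ∇ is the induced connection, A the shape operator, and ω the Lee form. -/
section Aux

variable {R V : Type} [CommRing R] [AddCommGroup V] [Module R V]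

lemma LCQK.g_add_right (d : LCQK R V) (X Y Z : V) :
    d.g X (Y + Z) = d.g X Y + d.g X Z := by
  rw [d.g_symm, d.g_add_left, d.g_symm Y, d.g_symm Z]

lemma LCQK.g_smul_right (d : LCQK R V) (f : R) (X Y : V) :
    d.g X (f • Y) = f * d.g X Y := by
  rw [d.g_symm, d.g_smul_left, d.g_symm]

lemma LCQK.g_neg_right (d : LCQK R V) (X Y : V) : d.g X (-Y) = -d.g X Y := by
  have h := d.g_smul_right (-1 : R) X Y
  simpa using h

lemma LCQK.g_sub_right (d : LCQK R V) (X Y Z : V) :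
    d.g X (Y - Z) = d.g X Y - d.g X Z := by
  rw [sub_eq_add_neg, d.g_add_right, d.g_neg_right, sub_eq_add_neg]

lemma LCQK.act_zero (d : LCQK R V) (X : V) : d.act X (0 : R) = 0 := by
  have h : d.act X 0 + 0 = d.act X 0 + d.act X 0 := by
    have h0 := d.act_add X 0 0
    simpa using h0
  exact (add_left_cancel h).symm

lemma LCQK.g_J_self (d : LCQK R V) (a : Fin 3) (X : V) :
    d.g X (d.J a X) = 0 := by
  have h1 := d.g_J a X (d.J a X)
  rw [d.J_sq, d.g_neg_right, d.g_symm (d.J a X) X] at h1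
  -- h1 : -(d.g X (d.J a X)) = d.g X (d.J a X)
  have h2 : d.g X (d.J a X) + d.g X (d.J a X) = 0 := by linear_combination -h1
  calc d.g X (d.J a X) = (d.half + d.half) * d.g X (d.J a X) := by
        rw [d.half_add, one_mul]
    _ = d.half * (d.g X (d.J a X) + d.g X (d.J a X)) := by ring
    _ = 0 := by rw [h2, mul_zero]

/-- expansion of `g(T, J_a ∇̄_X Z)` via the structure equation, for `T` tangent,
`Z ∈ D^⊥`. -/
lemma QCRSub.g_J_nabla (d : LCQK R V) (s : QCRSub R V d)
    (T : V) (hT : T ∈ s.DD ⊔ s.Dp) (a : Fin 3) (X Z : V) (hZ : Z ∈ s.Dp) :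
    d.g T (d.J a (d.nabla X Z))
      = d.g T (d.nabla X (d.J a Z))
        - d.half * (d.g (d.J a Z) d.B * d.g T X - d.g Z d.B * d.g T (d.J a X)
            - d.g X (d.J a Z) * d.g T d.B + d.g X Z * d.g T (d.J a d.B)) := by
  have h := congrArg (d.g T) (d.struct_eq a X Z)
  simp only [d.g_add_right, d.g_sub_right, d.g_smul_right] at h
  have hq1 : d.g T (d.J (a+1) Z) = 0 := by
    rw [d.g_symm]; exact s.J_anti (a+1) Z hZ T hT
  have hq2 : d.g T (d.J (a+2) Z) = 0 := by
    rw [d.g_symm]; exact s.J_anti (a+2) Z hZ T hT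
  rw [hq1, hq2] at h
  linear_combination -h

/-- `g(X - tan X, Y) = 0` used through symmetry: `g(tan W, Y) = g(W, Y)` for tangent `Y`. -/
lemma QCRSub.g_tan (d : LCQK R V) (s : QCRSub R V d)
    (W Y : V) (hY : Y ∈ s.DD ⊔ s.Dp) : d.g (s.tan W) Y = d.g W Y := by
  have h := s.tan_orth W Y hY
  rw [d.g_symm (W - s.tan W) Y] at h
  rw [d.g_sub_right] at h
  have := sub_eq_zero.mp h
  rw [d.g_symm Y W, d.g_symm Y (s.tan W)] at this
  exact this.symm

lemma LCQK.g_neg_left (d : LCQK R V) (X Y : V) : d.g (-X) Y = -d.g X Y := by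
  rw [d.g_symm, d.g_neg_right, d.g_symm]

/-- symmetry of the shape operator pairing for `N = J_a Z`, `Z ∈ D^⊥`. -/
lemma QCRSub.A_sym (d : LCQK R V) (s : QCRSub R V d)
    (a : Fin 3) (Z : V) (hZ : Z ∈ s.Dp) (X W : V)
    (hX : X ∈ s.DD ⊔ s.Dp) (hW : W ∈ s.DD ⊔ s.Dp) :
    d.g (s.A (d.J a Z) W) X = d.g (s.A (d.J a Z) X) W := by
  set N := d.J a Z with hN
  have hNX : d.g N X = 0 := s.J_anti a Z hZ X hX
  have hNW : d.g N W = 0 := s.J_anti a Z hZ W hW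
  -- step 1
  have s1 : d.g (s.A N W) X = -(d.g (d.nabla W N) X) := by
    unfold QCRSub.A
    rw [d.g_neg_left, s.g_tan d _ X hX]
  -- step 2 : metric compatibility
  have s2 : d.g (d.nabla W N) X = -(d.g N (d.nabla W X)) := by
    have h := d.nabla_metric W N X
    rw [hNX, d.act_zero] at h
    linear_combination -h
  -- step 3 : torsion-free
  have s3 : d.g N (d.nabla W X) = d.g N (d.nabla X W) := by
    have ht := congrArg (d.g N) (d.torsion_free W X)
    rw [d.g_sub_right] at ht
    have hb : d.g N (d.bracket W X) = 0 :=
      s.J_anti a Z hZ _ (s.bracket_tangent W hW X hX)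
    rw [hb] at ht
    linear_combination ht
  -- step 4
  have s4 : d.g N (d.nabla X W) = -(d.g (d.nabla X N) W) := by
    have h := d.nabla_metric X N W
    rw [hNW, d.act_zero] at h
    linear_combination -h
  -- step 5
  have s5 : d.g (d.nabla X N) W = -(d.g (s.A N X) W) := by
    unfold QCRSub.A
    rw [d.g_neg_left, s.g_tan d _ W hW]
    ring
  rw [s1, s2, s3, s4, s5]
  ring

end Aux

/-- equations (3.7) and (3.8): For a quaternion CR-submanifold `M` of
a l.c.q.K. manifold, for any `X ∈ Γ(D)` and `Z ∈ Γ(D^⊥)` one has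
`g(∇_X X, Z) = g(A_{J_aZ}X, J_aX) − ½‖X‖² ω(Z)` and
`g(∇_{J_aX}(J_aX), Z) = −g(A_{J_aZ}X, J_aX) − ½‖X‖² ω(Z)`. -/
theorem conn_lee_formulas {R V : Type} [CommRing R] [AddCommGroup V] [Module R V]
    (d : LCQK R V) (s : QCRSub R V d) :
    ∀ (a : Fin 3), ∀ X ∈ s.DD, ∀ Z ∈ s.Dp,
      d.g (s.conn X X) Z
          = d.g (s.A (d.J a Z) X) (d.J a X) - d.half * (d.g X X * d.lee Z) ∧
      d.g (s.conn (d.J a X) (d.J a X)) Z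
          = -(d.g (s.A (d.J a Z) X) (d.J a X)) - d.half * (d.g X X * d.lee Z) := by

  intro a X hX Z hZ
  have hXT : X ∈ s.DD ⊔ s.Dp := Submodule.mem_sup_left hX
  have hZT : Z ∈ s.DD ⊔ s.Dp := Submodule.mem_sup_right hZ
  have hWD : d.J a X ∈ s.DD := s.J_inv a X hX
  have hWT : d.J a X ∈ s.DD ⊔ s.Dp := Submodule.mem_sup_left hWD
  have hXZ : d.g X Z = 0 := s.orth X hX Z hZ
  have hWZ : d.g (d.J a X) Z = 0 := s.orth _ hWD Z hZ
  have hNX : d.g X (d.J a Z) = 0 := by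
    rw [d.g_symm]; exact s.J_anti a Z hZ X hXT
  have hNW : d.g (d.J a X) (d.J a Z) = 0 := by
    rw [d.g_symm]; exact s.J_anti a Z hZ _ hWT
  have hXW : d.g (d.J a X) X = 0 := by
    rw [d.g_symm]; exact d.g_J_self a X
  have hWW : d.g (d.J a X) (d.J a X) = d.g X X := d.g_J a X X
  -- g(J_aX, ∇̄_X (J_aZ)) = -g(A_{J_aZ}X, J_aX)
  have hAX : d.g (d.J a X) (d.nabla X (d.J a Z))
      = -(d.g (s.A (d.J a Z) X) (d.J a X)) := by
    rw [d.g_symm, ← s.g_tan d (d.nabla X (d.J a Z)) (d.J a X) hWT]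
    show d.g (s.tan (d.nabla X (d.J a Z))) (d.J a X) = _
    have : s.tan (d.nabla X (d.J a Z)) = -(s.A (d.J a Z) X) := by
      unfold QCRSub.A; rw [neg_neg]
    rw [this, d.g_neg_left]
  -- key1 : g(X, ∇̄_X Z)
  have key1 : d.g X (d.nabla X Z)
      = -(d.g (s.A (d.J a Z) X) (d.J a X)) + d.half * (d.g Z d.B * d.g X X) := by
    have h0 : d.g X (d.nabla X Z) = d.g (d.J a X) (d.J a (d.nabla X Z)) :=
      (d.g_J a X (d.nabla X Z)).symm
    rw [h0, s.g_J_nabla d (d.J a X) hWT a X Z hZ, hAX, hXW, hWW, hNX, hXZ]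
    ring
  -- equation (3.7)
  constructor
  · have h1 : d.g (s.conn X X) Z = d.g (d.nabla X X) Z := by
      unfold QCRSub.conn
      exact s.g_tan d (d.nabla X X) Z hZT
    have h2 := d.nabla_metric X X Z
    rw [hXZ, d.act_zero] at h2
    rw [h1]
    unfold LCQK.lee
    linear_combination -h2 - key1
  -- equation (3.8)
  · have hJW : d.J a (d.J a X) = -X := d.J_sq a X
    have hXJW : d.g X (d.J a (d.J a X)) = -(d.g X X) := by
      rw [hJW, d.g_neg_right]
    have hXW' : d.g X (d.J a X) = 0 := d.g_J_self a X
    -- g(X, ∇̄_{J_aX} (J_aZ)) = -g(A_{J_aZ}(J_aX), X) = -g(A_{J_aZ}X, J_aX)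
    have hAW : d.g X (d.nabla (d.J a X) (d.J a Z))
        = -(d.g (s.A (d.J a Z) X) (d.J a X)) := by
      rw [d.g_symm, ← s.g_tan d (d.nabla (d.J a X) (d.J a Z)) X hXT]
      show d.g (s.tan (d.nabla (d.J a X) (d.J a Z))) X = _
      have h3 : s.tan (d.nabla (d.J a X) (d.J a Z)) = -(s.A (d.J a Z) (d.J a X)) := by
        unfold QCRSub.A; rw [neg_neg]
      rw [h3, d.g_neg_left, s.A_sym d a Z hZ X (d.J a X) hXT hWT]
    -- key2 : g(J_aX, ∇̄_{J_aX} Z)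
    have key2 : d.g (d.J a X) (d.nabla (d.J a X) Z)
        = d.g (s.A (d.J a Z) X) (d.J a X) + d.half * (d.g Z d.B * d.g X X) := by
      have h0 : d.g (d.J a X) (d.nabla (d.J a X) Z)
          = d.g (d.J a (d.J a X)) (d.J a (d.nabla (d.J a X) Z)) :=
        (d.g_J a (d.J a X) (d.nabla (d.J a X) Z)).symm
      rw [h0, hJW, d.g_neg_left,
        s.g_J_nabla d X hXT a (d.J a X) Z hZ, hAW, hXW', hXJW, hNW, hWZ]
      ring
    have h1 : d.g (s.conn (d.J a X) (d.J a X)) Z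
        = d.g (d.nabla (d.J a X) (d.J a X)) Z := by
      unfold QCRSub.conn
      exact s.g_tan d (d.nabla (d.J a X) (d.J a X)) Z hZT
    have h2 := d.nabla_metric (d.J a X) (d.J a X) Z
    rw [hWZ, d.act_zero] at h2
    rw [h1]
    unfold LCQK.lee
    linear_combination -h2 - key2
end

section
/- Let M be a quaternion CR-submanifold of a locally conformal quaternion Kaehler manifold M̄. Then for any X, Y ∈ Γ(D) one has h(X, J_aY) = ϖ_a(∇_X Y) + t_a h(X,Y) + (1/2){g(X,Y)(J_aB)^⊥ − Ω_a(X,Y)B^⊥}, where for a tangent vector field W one writes J_aW = φ_aW + ϖ_aW with φ_aW tangent and ϖ_aW normal, for a normal vector field V one writes J_aV = f_aV + t_aV with f_aV tangent and t_aV normal, Ω_a(X,Y) = g(X, J_aY), and B^⊥ denotes the normal component of the Lee vector field B. -/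
section Aux

variable {R V : Type} [CommRing R] [AddCommGroup V] [Module R V] {d : LCQK R V}

lemma nor_add (s : QCRSub R V d) (X Y : V) : s.nor (X + Y) = s.nor X + s.nor Y := by
  simp [QCRSub.nor, s.tan_add]; abel

lemma nor_sub (s : QCRSub R V d) (X Y : V) : s.nor (X - Y) = s.nor X - s.nor Y := by
  have h := nor_add s (X - Y) Y
  rw [sub_add_cancel] at h
  rw [h]; abel

lemma nor_smul (s : QCRSub R V d) (f : R) (X : V) : s.nor (f • X) = f • s.nor X := by
  simp [QCRSub.nor, s.tan_smul, smul_sub]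

lemma nor_of_mem (s : QCRSub R V d) {X : V} (hX : X ∈ s.DD ⊔ s.Dp) : s.nor X = 0 := by
  simp [QCRSub.nor, s.tan_of_mem X hX]

end Aux

/-- Lemma 3.2, equation (3.9): For a quaternion CR-submanifold `M` of
a l.c.q.K. manifold, for any `X, Y ∈ Γ(D)` one has
`h(X, J_aY) = ϖ_a(∇_X Y) + t_a h(X,Y) + ½{g(X,Y)(J_aB)^⊥ − Ω_a(X,Y)B^⊥}`,
where `ϖ_a` (resp. `t_a`) is the normal part of `J_a` applied to a tangent (resp.
normal) field, `Ω_a(X,Y) = g(X, J_aY)` and `B^⊥` is the normal part of `B`. -/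
theorem h_JY_formula {R V : Type} [CommRing R] [AddCommGroup V] [Module R V]
    (d : LCQK R V) (s : QCRSub R V d) :
    ∀ (a : Fin 3), ∀ X ∈ s.DD, ∀ Y ∈ s.DD,
      s.h X (d.J a Y)
        = s.varpi a (s.conn X Y) + s.tn a (s.h X Y)
          + d.half • (d.g X Y • s.nor (d.J a d.B) - d.Om a X Y • s.nor d.B) := by
  intro a X hX Y hY
  have memD : ∀ Z ∈ s.DD, Z ∈ s.DD ⊔ s.Dp := fun Z hZ => Submodule.mem_sup_left hZ
  have nX : s.nor X = 0 := nor_of_mem s (memD X hX)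
  have nJaX : s.nor (d.J a X) = 0 := nor_of_mem s (memD _ (s.J_inv a X hX))
  have nJ1Y : s.nor (d.J (a + 1) Y) = 0 := nor_of_mem s (memD _ (s.J_inv _ Y hY))
  have nJ2Y : s.nor (d.J (a + 2) Y) = 0 := nor_of_mem s (memD _ (s.J_inv _ Y hY))
  have hh : s.h X (d.J a Y) = s.nor (d.nabla X (d.J a Y)) := rfl
  rw [hh, d.struct_eq a X Y]
  have key : s.varpi a (s.conn X Y) + s.tn a (s.h X Y) = s.nor (d.J a (d.nabla X Y)) := by
    unfold QCRSub.varpi QCRSub.tn QCRSub.conn QCRSub.h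
    rw [← nor_add, ← d.J_add, add_sub_cancel]
  rw [key]
  rw [nor_add, nor_add, nor_add, nor_smul, nor_smul, nor_smul, nJ1Y, nJ2Y,
    nor_add, nor_sub, nor_sub, nor_smul, nor_smul, nor_smul, nor_smul, nX, nJaX]
  simp only [smul_zero, add_zero, neg_zero, zero_sub]
  rw [LCQK.Om, smul_add, smul_neg, smul_sub]
  abel
end

section
/- Let M̄ be a compact locally conformal quaternion Kaehler manifold with the metric normalized so that the Lee form ω is parallel (∇̄ω = 0) and ‖ω‖ = 1, and let M be a quaternion CR-submanifold of M̄. Then for any orthonormal vector fields X ∈ Γ(D) and Y ∈ Γ(D^⊥) one has 0 = −R̄(X,Y,X,Y) + R̄(X,Y,J_aX,J_aY) + (1/4)ω(X)² + (1/4)ω(Y)² − 1/4, where R̄ is the Riemann curvature tensor of M̄. -/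
section CurvHelpers

namespace LCQK

variable {R V : Type} [CommRing R] [AddCommGroup V] [Module R V] (d : LCQK R V)

lemma two_cancel (d : LCQK R V) (t : R) (h : t + t = 0) : t = 0 := by
  have h1 : t = (d.half + d.half) * t := by rw [d.half_add, one_mul]
  calc t = (d.half + d.half) * t := h1
    _ = d.half * (t + t) := by ring
    _ = 0 := by rw [h, mul_zero]

lemma g_zero_left (X : V) : d.g 0 X = 0 := by
  have h := d.g_add_left 0 0 X
  rw [add_zero] at h
  exact right_eq_add.mp h

lemma g_zero_right (X : V) : d.g X 0 = 0 := by
  rw [d.g_symm]; exact d.g_zero_left X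

lemma g_add_right_s12 (X Y Z : V) : d.g X (Y + Z) = d.g X Y + d.g X Z := by
  rw [d.g_symm, d.g_add_left, d.g_symm Y, d.g_symm Z]

lemma g_smul_right_s12 (f : R) (X Y : V) : d.g X (f • Y) = f * d.g X Y := by
  rw [d.g_symm, d.g_smul_left, d.g_symm]

lemma g_neg_left_s12 (X Y : V) : d.g (-X) Y = -(d.g X Y) := by
  rw [← neg_one_smul R X, d.g_smul_left]; ring

lemma g_neg_right_s12 (X Y : V) : d.g X (-Y) = -(d.g X Y) := by
  rw [d.g_symm, d.g_neg_left_s12, d.g_symm]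

lemma g_sub_left (X Y Z : V) : d.g (X - Y) Z = d.g X Z - d.g Y Z := by
  rw [sub_eq_add_neg, d.g_add_left, d.g_neg_left_s12, sub_eq_add_neg]

lemma g_sub_right_s12 (X Y Z : V) : d.g X (Y - Z) = d.g X Y - d.g X Z := by
  rw [d.g_symm, d.g_sub_left, d.g_symm Y, d.g_symm Z]

lemma J_zero (a : Fin 3) : d.J a 0 = 0 := by
  have h := d.J_add a 0 0
  rw [add_zero] at h
  exact right_eq_add.mp h

lemma J_neg (a : Fin 3) (X : V) : d.J a (-X) = -(d.J a X) := by
  rw [← neg_one_smul R X, d.J_smul, neg_one_smul]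

lemma J_sub (a : Fin 3) (X Y : V) : d.J a (X - Y) = d.J a X - d.J a Y := by
  rw [sub_eq_add_neg, d.J_add, d.J_neg, sub_eq_add_neg]

lemma act_zero_s12 (X : V) : d.act X 0 = 0 := by
  have h := d.act_add X 0 0
  rw [add_zero] at h
  exact right_eq_add.mp h

lemma act_one (X : V) : d.act X 1 = 0 := by
  have h := d.act_mul X 1 1
  simp only [one_mul] at h
  exact right_eq_add.mp h

lemma act_neg (X : V) (f : R) : d.act X (-f) = -(d.act X f) := by
  have h := d.act_add X f (-f)
  rw [add_neg_cancel, d.act_zero_s12] at h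
  linear_combination -h

lemma act_sub (X : V) (f g : R) : d.act X (f - g) = d.act X f - d.act X g := by
  rw [sub_eq_add_neg, d.act_add, d.act_neg, sub_eq_add_neg]

lemma act_half (X : V) : d.act X d.half = 0 := by
  have h := d.act_add X d.half d.half
  rw [d.half_add, d.act_one] at h
  exact d.two_cancel _ h.symm

lemma nabla_zero_right (X : V) : d.nabla X 0 = 0 := by
  have h := d.nabla_add_right X 0 0
  rw [add_zero] at h
  exact right_eq_add.mp h

lemma nabla_neg_right (X Y : V) : d.nabla X (-Y) = -(d.nabla X Y) := by
  rw [← neg_one_smul R Y, d.nabla_smul_right, d.act_neg, d.act_one]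
  simp

lemma nabla_sub_right (X Y Z : V) : d.nabla X (Y - Z) = d.nabla X Y - d.nabla X Z := by
  rw [sub_eq_add_neg, d.nabla_add_right, d.nabla_neg_right, sub_eq_add_neg]

lemma nabla_neg_left (X Y : V) : d.nabla (-X) Y = -(d.nabla X Y) := by
  rw [← neg_one_smul R X, d.nabla_smul_left, neg_one_smul]

lemma nabla_sub_left (X Y Z : V) : d.nabla (X - Y) Z = d.nabla X Z - d.nabla Y Z := by
  rw [sub_eq_add_neg, d.nabla_add_left, d.nabla_neg_left, sub_eq_add_neg]

lemma skew (a : Fin 3) (X Y : V) : d.g (d.J a X) Y = -(d.g X (d.J a Y)) := by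
  have h := d.g_J a (d.J a X) Y
  rw [d.J_sq, d.g_neg_left_s12] at h
  exact h.symm

lemma flip (a : Fin 3) (X Y : V) : d.g X (d.J a Y) = -(d.g Y (d.J a X)) := by
  rw [d.g_symm X, d.skew]

lemma gJ_self (a : Fin 3) (X : V) : d.g X (d.J a X) = 0 := by
  have h := d.flip a X X
  exact d.two_cancel _ (by linear_combination h)

lemma Q_diag (a : Fin 3) (X : V) : d.Q a a X = 0 := by
  have h := d.Q_skew a a X
  exact d.two_cancel _ (by linear_combination h)

lemma fin_c_eq_b1 : ∀ x : Fin 3, x + 2 = x + 1 + 1 := by decide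
lemma fin_a_eq_b2 : ∀ x : Fin 3, x = x + 1 + 2 := by decide
lemma fin_a_eq_c1 : ∀ x : Fin 3, x = x + 2 + 1 := by decide
lemma fin_b_eq_c2 : ∀ x : Fin 3, x + 1 = x + 2 + 2 := by decide

lemma Jab (a b c : Fin 3) (hb : b = a + 1) (hc : c = a + 2) (X : V) :
    d.J a (d.J b X) = d.J c X := by
  subst hb; subst hc; exact d.J_cyc a X

lemma Jac (a b c : Fin 3) (hb : b = a + 1) (hc : c = a + 2) (X : V) :
    d.J a (d.J c X) = -(d.J b X) := by
  rw [← d.Jab a b c hb hc X, d.J_sq]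

lemma SE (a b c : Fin 3) (hb : b = a + 1) (hc : c = a + 2) (X Y : V) :
    d.nabla X (d.J a Y) = d.J a (d.nabla X Y)
      + d.half • ((d.g (d.J a Y) d.B) • X - (d.g Y d.B) • d.J a X
          - (d.g X (d.J a Y)) • d.B + (d.g X Y) • d.J a d.B)
      + (d.Q a b X) • d.J b Y + (d.Q a c X) • d.J c Y := by
  subst hb; subst hc; exact d.struct_eq a X Y

end LCQK

end CurvHelpers

/-- equation (4.5): Let `M̄` be a compact l.c.q.K. manifold with the
metric normalized so that the Lee form `ω` is parallel (`∇̄B = 0`) and `‖ω‖ = 1`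
(`g(B,B) = 1`), and `M` a quaternion CR-submanifold.  For any orthonormal `X ∈ Γ(D)`,
`Y ∈ Γ(D^⊥)` one has
`0 = −R̄(X,Y,X,Y) + R̄(X,Y,J_aX,J_aY) + ¼ω(X)² + ¼ω(Y)² − ¼`. -/
theorem curvature_identity {R V : Type} [CommRing R] [AddCommGroup V] [Module R V]
    (d : LCQK R V) (s : QCRSub R V d)
    (hpar : ∀ X : V, d.nabla X d.B = 0)
    (hunit : d.g d.B d.B = 1) :
    ∀ (a : Fin 3), ∀ X ∈ s.DD, ∀ Y ∈ s.Dp, d.g X X = 1 → d.g Y Y = 1 →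
      0 = -(d.R4 X Y X Y) + d.R4 X Y (d.J a X) (d.J a Y)
            + d.half * d.half * (d.lee X * d.lee X)
            + d.half * d.half * (d.lee Y * d.lee Y)
            - d.half * d.half := by
  intro a X hX Y hY hXX hYY
  obtain ⟨b, hb⟩ : ∃ b, b = a + 1 := ⟨_, rfl⟩
  obtain ⟨c, hc⟩ : ∃ c, c = a + 2 := ⟨_, rfl⟩
  have h1 : c = b + 1 := by rw [hb, hc]; exact LCQK.fin_c_eq_b1 a
  have h2 : a = b + 2 := by rw [hb]; exact LCQK.fin_a_eq_b2 a
  have h3 : a = c + 1 := by rw [hc]; exact LCQK.fin_a_eq_c1 a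
  have h4 : b = c + 2 := by rw [hb, hc]; exact LCQK.fin_b_eq_c2 a
  have hXT : X ∈ s.DD ⊔ s.Dp := Submodule.mem_sup_left hX
  have hYT : Y ∈ s.DD ⊔ s.Dp := Submodule.mem_sup_right hY
  have z1 : ∀ e : Fin 3, d.g X (d.J e Y) = 0 := fun e => by
    rw [d.g_symm]; exact s.J_anti e Y hY X hXT
  have z2 : ∀ e : Fin 3, d.g Y (d.J e Y) = 0 := fun e => by
    rw [d.g_symm]; exact s.J_anti e Y hY Y hYT
  have z3 : ∀ e : Fin 3, d.g Y (d.J e X) = 0 := fun e => by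
    rw [d.g_symm]; exact s.orth _ (s.J_inv e X hX) Y hY
  have z6 : d.g X Y = 0 := s.orth X hX Y hY
  have z6' : d.g Y X = 0 := by rw [d.g_symm]; exact z6
  have z8 : ∀ e : Fin 3, d.g (d.nabla X Y) (d.J e Y) = d.g (d.nabla Y X) (d.J e Y) :=
    fun e => by
    have h0 := s.J_anti e Y hY _ (s.bracket_tangent X hXT Y hYT)
    rw [← d.torsion_free X Y, d.g_sub_right_s12, sub_eq_zero] at h0
    rw [d.g_symm (d.nabla X Y) (d.J e Y), d.g_symm (d.nabla Y X) (d.J e Y)]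
    exact h0
  have oBX : ∀ e : Fin 3, d.g d.B (d.J e X) = -(d.g X (d.J e d.B)) :=
    fun e => d.flip e d.B X
  have oBY : ∀ e : Fin 3, d.g d.B (d.J e Y) = -(d.g Y (d.J e d.B)) :=
    fun e => d.flip e d.B Y
  have oXn : ∀ (e : Fin 3) (P Q : V),
      d.g X (d.J e (d.nabla P Q)) = -(d.g (d.nabla P Q) (d.J e X)) :=
    fun e P Q => d.flip e X _
  have oYn : ∀ (e : Fin 3) (P Q : V),
      d.g Y (d.J e (d.nabla P Q)) = -(d.g (d.nabla P Q) (d.J e Y)) :=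
    fun e P Q => d.flip e Y _
  have oBn : ∀ (e : Fin 3) (P Q : V),
      d.g d.B (d.J e (d.nabla P Q)) = -(d.g (d.nabla P Q) (d.J e d.B)) :=
    fun e P Q => d.flip e d.B _
  have oXn0 : ∀ P Q : V, d.g X (d.nabla P Q) = d.g (d.nabla P Q) X :=
    fun P Q => d.g_symm _ _
  have oYn0 : ∀ P Q : V, d.g Y (d.nabla P Q) = d.g (d.nabla P Q) Y :=
    fun P Q => d.g_symm _ _
  have oBn0 : ∀ P Q : V, d.g d.B (d.nabla P Q) = d.g (d.nabla P Q) d.B :=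
    fun P Q => d.g_symm _ _
  have oBX0 : d.g d.B X = d.g X d.B := d.g_symm _ _
  have oBY0 : d.g d.B Y = d.g Y d.B := d.g_symm _ _
  have br : ∀ P Q : V, d.bracket P Q = d.nabla P Q - d.nabla Q P :=
    fun P Q => (d.torsion_free P Q).symm
  have F1 : d.g (d.nabla Y X) X = 0 := by
    have hm := d.nabla_metric Y X X
    rw [hXX, d.act_one, d.g_symm X (d.nabla Y X)] at hm
    exact d.two_cancel _ (by linear_combination -hm)
  have F2 : d.g (d.nabla X X) Y = -(d.g (d.nabla X Y) X) := by
    have hm := d.nabla_metric X X Y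
    rw [z6, d.act_zero_s12, d.g_symm X (d.nabla X Y)] at hm
    linear_combination -hm
  have F3 : d.g (d.nabla X X) (d.J a Y)
      = d.g (d.nabla X Y) (d.J a X) + d.half * d.g Y (d.J a d.B) := by
    have hm := d.nabla_metric X X (d.J a Y)
    rw [z1 a, d.act_zero_s12, d.SE a b c hb hc X Y] at hm
    simp only [d.g_add_right_s12, d.g_smul_right_s12, d.g_sub_right_s12, d.g_neg_right_s12,
      d.skew, oXn, hXX, z1, z6, d.gJ_self, mul_one, mul_zero, mul_neg,
      add_zero, zero_add, sub_zero, neg_zero, neg_neg] at hm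
    linear_combination -hm
  simp only [LCQK.R4, LCQK.curv, LCQK.lee]
  simp only [br, d.SE a b c hb hc, d.SE b c a h1 h2, d.SE c a b h3 h4,
    d.nabla_add_right, d.nabla_sub_right, d.nabla_add_left, d.nabla_sub_left,
    d.nabla_smul_left, d.nabla_smul_right, hpar, d.nabla_zero_right,
    d.nabla_neg_right, F1, F2, F3,
    d.J_add, d.J_sub, d.J_smul, d.J_neg, d.J_zero, d.J_sq,
    d.Jab a b c hb hc, d.Jac a b c hb hc, d.Jab b c a h1 h2, d.Jac b c a h1 h2,
    d.Jab c a b h3 h4, d.Jac c a b h3 h4,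
    d.skew, d.g_add_left, d.g_add_right_s12, d.g_sub_left, d.g_sub_right_s12,
    d.g_smul_left, d.g_smul_right_s12, d.g_neg_left_s12, d.g_neg_right_s12,
    d.g_zero_left, d.g_zero_right,
    d.nabla_metric, d.act_add, d.act_sub, d.act_neg, d.act_mul, d.act_zero_s12,
    d.act_one, d.act_half,
    d.Q_diag, d.Q_skew b a, d.Q_skew c a, d.Q_skew c b,
    z1, z2, z3, z6, z6', z8, hXX, hYY, hunit, d.gJ_self,
    oBX, oBY, oXn, oYn, oBn, oXn0, oYn0, oBn0, oBX0, oBY0,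
    smul_add, smul_sub, smul_neg, smul_zero, zero_smul, one_smul, neg_smul,
    add_zero, zero_add, sub_zero, zero_sub, neg_zero, neg_neg,
    mul_zero, zero_mul, mul_one, one_mul, mul_neg, neg_mul, sub_self]
  ring_nf
end
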